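/- Let a < b, let h : (0,1) → (0,∞) be a given function that is Lebesgue integrable on (0,1), let φ : [a,b] → [a,b] be an affine continuous map (φ(λx + (1−λ)y) = λφ(x) + (1−λ)φ(y)) with φ(a) < φ(b), let g : [a,b] → [0,∞) be φ_h-convex and Lebesgue integrable, and let f : [a,b] → [0,∞) be Lebesgue integrable and (g,φ_h)-convex dominated on [a,b]. Then |[f(φ(a)) + f(φ(b))] ∫_0^1 h(t) dt − (1/(φ(b) − φ(a))) ∫_{φ(a)}^{φ(b)} f(x) dx| ≤ [g(φ(a)) + g(φ(b))] ∫_0^1 h(t) dt − (1/(φ(b) − φ(a))) ∫_{φ(a)}^{φ(b)} g(x) dx. -/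

import Mathlib

open MeasureTheory Set

/-- `F` is `φ_h`-convex on `I`. -/
def PhiHConvexOn (I : Set ℝ) (h φ F : ℝ → ℝ) : Prop :=
  ∀ x ∈ I, ∀ y ∈ I, ∀ t ∈ Set.Ioo (0:ℝ) 1,
    F (t * φ x + (1 - t) * φ y) ≤ h t * F (φ x) + h (1 - t) * F (φ y)

/-- `f` is `(g, φ_h)`-convex dominated on `I`. -/
def GPhiHConvexDominated (I : Set ℝ) (h φ g f : ℝ → ℝ) : Prop :=
  ∀ x ∈ I, ∀ y ∈ I, ∀ t ∈ Set.Ioo (0:ℝ) 1,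
    |h t * f (φ x) + h (1 - t) * f (φ y) - f (t * φ x + (1 - t) * φ y)| ≤
      h t * g (φ x) + h (1 - t) * g (φ y) - g (t * φ x + (1 - t) * φ y)

theorem stmt3 (a b : ℝ) (hab : a < b) (h φ f g : ℝ → ℝ)
    (hh : ∀ t ∈ Set.Ioo (0:ℝ) 1, 0 < h t)
    (hhint : IntervalIntegrable h MeasureTheory.volume 0 1)
    (hφmaps : Set.MapsTo φ (Set.Icc a b) (Set.Icc a b))
    (hφaff : ∀ x ∈ Set.Icc a b, ∀ y ∈ Set.Icc a b, ∀ l ∈ Set.Icc (0:ℝ) 1,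
      φ (l * x + (1 - l) * y) = l * φ x + (1 - l) * φ y)
    (hφcont : ContinuousOn φ (Set.Icc a b))
    (hφab : φ a < φ b)
    (hg0 : ∀ x ∈ Set.Icc a b, 0 ≤ g x)
    (hgconv : PhiHConvexOn (Set.Icc a b) h φ g)
    (hgint : IntegrableOn g (Set.Icc a b))
    (hf0 : ∀ x ∈ Set.Icc a b, 0 ≤ f x)
    (hfint : IntegrableOn f (Set.Icc a b))
    (hfdom : GPhiHConvexDominated (Set.Icc a b) h φ g f) :
    |(f (φ a) + f (φ b)) * (∫ t in (0:ℝ)..1, h t) -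
        (1 / (φ b - φ a)) * ∫ x in φ a..φ b, f x| ≤
      (g (φ a) + g (φ b)) * (∫ t in (0:ℝ)..1, h t) -
        (1 / (φ b - φ a)) * ∫ x in φ a..φ b, g x := by
  set A := φ a with hA
  set B := φ b with hB
  have ha : a ∈ Icc a b := left_mem_Icc.2 hab.le
  have hb : b ∈ Icc a b := right_mem_Icc.2 hab.le
  have hAB : A < B := hφab
  have hABne : A - B ≠ 0 := by linarith
  have hsub : Icc A B ⊆ Icc a b :=
    Icc_subset_Icc (hφmaps ha).1 (hφmaps hb).2
  -- interval integrability of f and g on [A, B]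
  have fAB : IntervalIntegrable f volume A B := by
    rw [intervalIntegrable_iff_integrableOn_Icc_of_le hAB.le]
    exact hfint.mono_set hsub
  have gAB : IntervalIntegrable g volume A B := by
    rw [intervalIntegrable_iff_integrableOn_Icc_of_le hAB.le]
    exact hgint.mono_set hsub
  -- integrability of the compositions t ↦ f((A-B)t + B)
  have compf : IntervalIntegrable (fun t => f ((A - B) * t + B)) volume 0 1 := by
    have h1 := (fAB.comp_add_right B).comp_mul_left (c := A - B)
    simpa [hABne, div_self hABne] using h1.symm
  have compg : IntervalIntegrable (fun t => g ((A - B) * t + B)) volume 0 1 := by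
    have h1 := (gAB.comp_add_right B).comp_mul_left (c := A - B)
    simpa [hABne, div_self hABne] using h1.symm
  have h1int : IntervalIntegrable (fun t => h (1 - t)) volume 0 1 := by
    have := hhint.comp_sub_left 1
    simpa using this.symm
  set L : ℝ → ℝ := fun t => h t * f A + h (1 - t) * f B - f ((A - B) * t + B) with hL
  set R : ℝ → ℝ := fun t => h t * g A + h (1 - t) * g B - g ((A - B) * t + B) with hR
  have LI : IntervalIntegrable L volume 0 1 :=
    ((hhint.mul_const _).add (h1int.mul_const _)).sub compf
  have RI : IntervalIntegrable R volume 0 1 :=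
    ((hhint.mul_const _).add (h1int.mul_const _)).sub compg
  -- integral computations
  have hcompf : (∫ t in (0:ℝ)..1, f ((A - B) * t + B)) = (1 / (B - A)) * ∫ x in A..B, f x := by
    rw [intervalIntegral.integral_comp_mul_add f hABne B]
    have : ((A - B) * 0 + B) = B := by ring
    rw [this]
    have : ((A - B) * 1 + B) = A := by ring
    rw [this, intervalIntegral.integral_symm A B]
    simp only [smul_eq_mul]
    rw [one_div, mul_neg, ← neg_mul, neg_inv, neg_sub]
  have hcompg : (∫ t in (0:ℝ)..1, g ((A - B) * t + B)) = (1 / (B - A)) * ∫ x in A..B, g x := by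
    rw [intervalIntegral.integral_comp_mul_add g hABne B]
    have : ((A - B) * 0 + B) = B := by ring
    rw [this]
    have : ((A - B) * 1 + B) = A := by ring
    rw [this, intervalIntegral.integral_symm A B]
    simp only [smul_eq_mul]
    rw [one_div, mul_neg, ← neg_mul, neg_inv, neg_sub]
  have hsym : (∫ t in (0:ℝ)..1, h (1 - t)) = ∫ t in (0:ℝ)..1, h t := by
    have := intervalIntegral.integral_comp_sub_left (a := 0) (b := 1) h 1
    simpa using this
  have hLint : (∫ t in (0:ℝ)..1, L t)
      = (f A + f B) * (∫ t in (0:ℝ)..1, h t) - (1 / (B - A)) * ∫ x in A..B, f x := by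
    rw [hL]
    rw [intervalIntegral.integral_sub ((hhint.mul_const _).add (h1int.mul_const _)) compf,
      intervalIntegral.integral_add (hhint.mul_const _) (h1int.mul_const _),
      intervalIntegral.integral_mul_const, intervalIntegral.integral_mul_const,
      hsym, hcompf]
    ring
  have hRint : (∫ t in (0:ℝ)..1, R t)
      = (g A + g B) * (∫ t in (0:ℝ)..1, h t) - (1 / (B - A)) * ∫ x in A..B, g x := by
    rw [hR]
    rw [intervalIntegral.integral_sub ((hhint.mul_const _).add (h1int.mul_const _)) compg,
      intervalIntegral.integral_add (hhint.mul_const _) (h1int.mul_const _),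
      intervalIntegral.integral_mul_const, intervalIntegral.integral_mul_const,
      hsym, hcompg]
    ring
  -- pointwise bound a.e. on [0,1]
  have hae : ∀ᵐ t ∂(volume.restrict (Icc (0:ℝ) 1)), t ∈ Ioo (0:ℝ) 1 := by
    rw [← Measure.restrict_congr_set Ioo_ae_eq_Icc]
    exact ae_restrict_mem measurableSet_Ioo
  have hptwise : ∀ t ∈ Ioo (0:ℝ) 1, |L t| ≤ R t := by
    intro t ht
    have hdom := hfdom a ha b hb t ht
    have e : t * A + (1 - t) * B = (A - B) * t + B := by ring
    rw [e] at hdom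
    exact hdom
  have hmono : (∫ t in (0:ℝ)..1, |L t|) ≤ ∫ t in (0:ℝ)..1, R t := by
    apply intervalIntegral.integral_mono_ae_restrict (by norm_num) LI.abs RI
    filter_upwards [hae] with t ht
    exact hptwise t ht
  calc |(f A + f B) * (∫ t in (0:ℝ)..1, h t) - (1 / (B - A)) * ∫ x in A..B, f x|
      = |∫ t in (0:ℝ)..1, L t| := by rw [hLint]
    _ ≤ ∫ t in (0:ℝ)..1, |L t| := intervalIntegral.abs_integral_le_integral_abs (by norm_num)
    _ ≤ ∫ t in (0:ℝ)..1, R t := hmono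
    _ = (g A + g B) * (∫ t in (0:ℝ)..1, h t) - (1 / (B - A)) * ∫ x in A..B, g x := hRint
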